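/- Identifiability condition (Proposition 1): the matrix (1/σ_y²) G^T P_y^T P_y G + (1/σ_u²) P_u^T P_u is invertible if and only if for every missing input time τ ∉ {t^u_i}, the vectors {P_y S^{τ-1} g' : τ missing} are such that no nontrivial linear combination Σ_{τ missing} α_τ P_y S^{τ-1} g' vanishes, where S is the upward shift and g' the zero-extension of g. In particular, invertibility holds whenever for every missing input time τ there exist k ∈ {0,...,n} and an observed output time τ_y ∈ {t^y_i} with g_k ≠ 0 and k + τ = τ_y and the columns {P_y G e_τ} over missing τ are linearly independent. -/

import Mathlib

open Matrix



lemma aux_dp_self_nonneg {m : ℕ} (v : Fin m → ℝ) : 0 ≤ v ⬝ᵥ v :=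
  Fintype.sum_nonneg fun i => mul_self_nonneg (v i)

lemma aux_key {N Nu Ny : ℕ} {σy2 σu2 : ℝ} (hσy : 0 < σy2) (hσu : 0 < σu2)
    (A : Matrix (Fin Ny) (Fin N) ℝ) (B : Matrix (Fin Nu) (Fin N) ℝ) :
    IsUnit (σy2⁻¹ • (Aᵀ * A) + σu2⁻¹ • (Bᵀ * B)) ↔
      ∀ x : Fin N → ℝ, A.mulVec x = 0 → B.mulVec x = 0 → x = 0 := by
  set M := σy2⁻¹ • (Aᵀ * A) + σu2⁻¹ • (Bᵀ * B) with hM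
  constructor
  · intro h x hA hB
    have hinj : Function.Injective M.mulVec := Matrix.mulVec_injective_iff_isUnit.2 h
    have hx : M.mulVec x = M.mulVec 0 := by
      rw [hM]
      simp [Matrix.add_mulVec, Matrix.smul_mulVec, ← Matrix.mulVec_mulVec, hA, hB]
    exact hinj hx
  · intro h
    rw [← Matrix.mulVec_injective_iff_isUnit]
    have hker : ∀ x, M.mulVec x = 0 → x = 0 := by
      intro x hx
      have h0 : x ⬝ᵥ M.mulVec x = 0 := by rw [hx]; simp
      have hcompute : x ⬝ᵥ M.mulVec x
          = σy2⁻¹ * ((A.mulVec x) ⬝ᵥ (A.mulVec x)) + σu2⁻¹ * ((B.mulVec x) ⬝ᵥ (B.mulVec x)) := by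
        rw [hM, Matrix.add_mulVec, dotProduct_add, Matrix.smul_mulVec,
          Matrix.smul_mulVec, dotProduct_smul, dotProduct_smul,
          ← Matrix.mulVec_mulVec, ← Matrix.mulVec_mulVec,
          Matrix.dotProduct_mulVec x Aᵀ, Matrix.dotProduct_mulVec x Bᵀ,
          Matrix.vecMul_transpose, Matrix.vecMul_transpose]
        rfl
      have ha : 0 ≤ (A.mulVec x) ⬝ᵥ (A.mulVec x) := aux_dp_self_nonneg _
      have hb : 0 ≤ (B.mulVec x) ⬝ᵥ (B.mulVec x) := aux_dp_self_nonneg _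
      have hA0 : (A.mulVec x) ⬝ᵥ (A.mulVec x) = 0 := by nlinarith [inv_pos.2 hσy, inv_pos.2 hσu]
      have hB0 : (B.mulVec x) ⬝ᵥ (B.mulVec x) = 0 := by nlinarith [inv_pos.2 hσy, inv_pos.2 hσu]
      exact h x (dotProduct_self_eq_zero.1 hA0) (dotProduct_self_eq_zero.1 hB0)
    intro x y hxy
    have : M.mulVec (x - y) = 0 := by rw [Matrix.mulVec_sub, hxy, sub_self]
    have := hker _ this
    exact sub_eq_zero.1 this

lemma aux_Spow {N : ℕ} (S : Matrix (Fin N) (Fin N) ℝ)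
    (hS : ∀ i j, S i j = if (j : ℕ) = (i : ℕ) + 1 then 1 else 0) :
    ∀ (m : ℕ) (i j : Fin N), ((Sᵀ) ^ m) i j = if (i : ℕ) = (j : ℕ) + m then 1 else 0 := by
  intro m
  induction m with
  | zero =>
    intro i j
    simp [Matrix.one_apply, Fin.ext_iff]
  | succ m ih =>
    intro i j
    rw [pow_succ, Matrix.mul_apply]
    by_cases hj : (j : ℕ) + 1 < N
    · rw [Finset.sum_eq_single (⟨(j : ℕ) + 1, hj⟩ : Fin N)]
      · rw [ih, Matrix.transpose_apply, hS]
        simp only [if_true, mul_one, if_pos rfl]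
        rw [show (j : ℕ) + 1 + m = (j : ℕ) + (m + 1) by omega]
      · intro b _ hb
        rw [Matrix.transpose_apply, hS]
        have : ¬ ((b : ℕ) = (j : ℕ) + 1) := fun h => hb (Fin.ext h)
        simp [this]
      · simp
    · rw [Finset.sum_eq_zero]
      · have : ¬ ((i : ℕ) = (j : ℕ) + (m + 1)) := by omega
        simp [this]
      · intro b _
        rw [Matrix.transpose_apply, hS]
        have : ¬ ((b : ℕ) = (j : ℕ) + 1) := by omega
        simp [this]

lemma aux_col {N n : ℕ} (hn : n ≤ N) (g' : Fin N → ℝ)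
    (G : Matrix (Fin N) (Fin N) ℝ)
    (hG : ∀ i j, G i j = if h : (j : ℕ) ≤ (i : ℕ) then g' ⟨(i : ℕ) - (j : ℕ), by exact Nat.lt_of_le_of_lt (Nat.sub_le _ _) i.isLt⟩ else 0)
    (S : Matrix (Fin N) (Fin N) ℝ)
    (hS : ∀ i j, S i j = if (j : ℕ) = (i : ℕ) + 1 then 1 else 0)
    (τ i : Fin N) : (((Sᵀ) ^ (τ : ℕ)).mulVec g') i = G i τ := by
  rw [Matrix.mulVec, dotProduct]
  by_cases hτ : (τ : ℕ) ≤ (i : ℕ)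
  · have hib : (i : ℕ) - (τ : ℕ) < N := by omega
    rw [Finset.sum_eq_single (⟨(i : ℕ) - (τ : ℕ), hib⟩ : Fin N)]
    · rw [aux_Spow S hS]
      have hc : (i : ℕ) = ((⟨(i : ℕ) - (τ : ℕ), hib⟩ : Fin N) : ℕ) + (τ : ℕ) := by
        simp; omega
      rw [if_pos hc, one_mul, hG, dif_pos hτ]
    · intro b _ hb
      rw [aux_Spow S hS]
      have : ¬ ((i : ℕ) = (b : ℕ) + (τ : ℕ)) := by
        intro h
        apply hb
        apply Fin.ext
        simp; omega
      simp [this]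
    · simp
  · rw [Finset.sum_eq_zero, hG, dif_neg hτ]
    intro b _
    rw [aux_Spow S hS]
    have : ¬ ((i : ℕ) = (b : ℕ) + (τ : ℕ)) := by omega
    simp [this]

/-- Identifiability condition (Proposition 1): the matrix
`(1/σ_y²) Gᵀ Pyᵀ Py G + (1/σ_u²) Puᵀ Pu` is invertible iff no nontrivial linear
combination `Σ_{τ missing} α_τ Py (Sᵀ)^τ g'` over the missing input times vanishes
(`S` the upward shift, `g'` the zero-extension of `g`, so `(Sᵀ)^τ g'` is the `τ`-th
column of `G`).  In particular, invertibility holds whenever the columns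
`{Py G e_τ : τ missing}` are linearly independent. -/
theorem identifiability_proposition
    (N n Nu Ny : ℕ) (hn : n ≤ N) (σy2 σu2 : ℝ) (hσy : 0 < σy2) (hσu : 0 < σu2)
    (g : Fin n → ℝ) (g' : Fin N → ℝ)
    (hg' : ∀ k : Fin N, g' k = if h : (k : ℕ) < n then g ⟨k, h⟩ else 0)
    (G : Matrix (Fin N) (Fin N) ℝ)
    (hG : ∀ i j, G i j = if h : (j : ℕ) ≤ (i : ℕ) then g' ⟨(i : ℕ) - (j : ℕ), by omega⟩ else 0)
    (tu : Fin Nu → Fin N) (htu : Function.Injective tu)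
    (ty : Fin Ny → Fin N) (hty : Function.Injective ty)
    (Pu : Matrix (Fin Nu) (Fin N) ℝ)
    (hPu : ∀ i j, Pu i j = if j = tu i then 1 else 0)
    (Py : Matrix (Fin Ny) (Fin N) ℝ)
    (hPy : ∀ i j, Py i j = if j = ty i then 1 else 0)
    (S : Matrix (Fin N) (Fin N) ℝ)
    (hS : ∀ i j, S i j = if (j : ℕ) = (i : ℕ) + 1 then 1 else 0) :
    (IsUnit (σy2⁻¹ • (Gᵀ * Pyᵀ * Py * G) + σu2⁻¹ • (Puᵀ * Pu)) ↔
      ∀ α : Fin N → ℝ, (∀ i : Fin N, (∃ k, tu k = i) → α i = 0) →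
        (∑ τ : Fin N, α τ • Py.mulVec (((Sᵀ) ^ (τ : ℕ)).mulVec g')) = 0 → α = 0) ∧
    (LinearIndependent ℝ
        (fun τ : {τ : Fin N // ¬ ∃ k, tu k = τ} =>
          (Py * G).mulVec (Pi.single τ.1 1)) →
      IsUnit (σy2⁻¹ • (Gᵀ * Pyᵀ * Py * G) + σu2⁻¹ • (Puᵀ * Pu))) := by
  -- rewrite the first summand as (Py*G)ᵀ * (Py*G)
  have hAB : Gᵀ * Pyᵀ * Py * G = (Py * G)ᵀ * (Py * G) := by
    rw [Matrix.transpose_mul, Matrix.mul_assoc, Matrix.mul_assoc]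
  set A : Matrix (Fin Ny) (Fin N) ℝ := Py * G with hA
  rw [hAB]
  have hkey := aux_key (N := N) hσy hσu A Pu
  -- Pu.mulVec characterization
  have hPuApp : ∀ (x : Fin N → ℝ) (k : Fin Nu), Pu.mulVec x k = x (tu k) := by
    intro x k
    simp [Matrix.mulVec, dotProduct, hPu, ite_mul, one_mul, zero_mul]
  have hPuVec : ∀ x : Fin N → ℝ,
      (Pu.mulVec x = 0 ↔ ∀ i : Fin N, (∃ k, tu k = i) → x i = 0) := by
    intro x
    constructor
    · rintro h i ⟨k, rfl⟩
      rw [← hPuApp x k, h]; rfl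
    · intro h
      funext k
      rw [hPuApp]
      exact h _ ⟨k, rfl⟩
  -- sum identity
  have hPyApp : ∀ (v : Fin N → ℝ) (i : Fin Ny), Py.mulVec v i = v (ty i) := by
    intro v i
    simp [Matrix.mulVec, dotProduct, hPy, ite_mul, one_mul, zero_mul]
  have hPyG : ∀ (i : Fin Ny) (τ : Fin N), A i τ = G (ty i) τ := by
    intro i τ
    simp [hA, Matrix.mul_apply, hPy, ite_mul, one_mul, zero_mul]
  have hsum : ∀ α : Fin N → ℝ,
      (∑ τ : Fin N, α τ • Py.mulVec (((Sᵀ) ^ (τ : ℕ)).mulVec g')) = A.mulVec α := by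
    intro α
    funext i
    simp only [Finset.sum_apply, Pi.smul_apply, smul_eq_mul]
    have hR : A.mulVec α i = ∑ τ : Fin N, G (ty i) τ * α τ := by
      rw [Matrix.mulVec, dotProduct]
      exact Finset.sum_congr rfl fun τ _ => by rw [hPyG]
    rw [hR]
    refine Finset.sum_congr rfl fun τ _ => ?_
    rw [hPyApp, aux_col hn g' G hG S hS τ (ty i), mul_comm]
  refine ⟨?_, ?_⟩
  · rw [hkey]
    constructor
    · intro h α hα hs
      exact h α (by rw [← hsum]; exact hs) ((hPuVec α).2 hα)
    · intro h x hAx hBx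
      exact h x ((hPuVec x).1 hBx) (by rw [hsum]; exact hAx)
  · intro hli
    rw [hkey]
    intro x hAx hBx
    have hx0 := (hPuVec x).1 hBx
    have hdec : A.mulVec x
        = ∑ τ : {τ : Fin N // ¬ ∃ k, tu k = τ}, x τ.1 • A.mulVec (Pi.single τ.1 1) := by
      have h1 : A.mulVec x = ∑ τ : Fin N, x τ • A.mulVec (Pi.single τ 1) := by
        funext i
        simp only [Finset.sum_apply, Pi.smul_apply, smul_eq_mul, Matrix.mulVec_single, op_smul_eq_mul, Matrix.col_apply, mul_one]
        rw [Matrix.mulVec, dotProduct]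
        exact Finset.sum_congr rfl fun τ _ => mul_comm _ _
      rw [h1]
      have h2 : ∑ τ : Fin N, x τ • A.mulVec (Pi.single τ 1)
          = ∑ τ ∈ Finset.univ.filter (fun τ : Fin N => ¬ ∃ k, tu k = τ),
              x τ • A.mulVec (Pi.single τ 1) := by
        refine (Finset.sum_filter_of_ne fun τ _ hne => ?_).symm
        by_contra hp
        rw [hx0 τ hp, zero_smul] at hne
        exact hne rfl
      rw [h2]
      exact Finset.sum_subtype _ (fun τ => by simp)
        (fun τ => x τ • A.mulVec (Pi.single τ 1))
    rw [Fintype.linearIndependent_iff] at hli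
    have hz := hli (fun τ => x τ.1) (by rw [← hdec]; exact hAx)
    funext i
    by_cases hi : ∃ k, tu k = i
    · exact hx0 i hi
    · exact hz ⟨i, hi⟩
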